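/- Let X be a Banach space, V ⊆ X a closed subspace, and suppose: (a) (Id − L₀)^{-1} is a bounded operator on V; (b) f_δ − f₀ ∈ V with f_δ → f₀ in X as δ → 0; (c) the difference quotients (L_δ − L₀)/δ are uniformly bounded in operator norm for small δ > 0; (d) (L_δ − L₀) f₀ / δ → ṙ in X as δ → 0, with ṙ ∈ V and (L_δ − L₀) f_δ / δ ∈ V. Then (f_δ − f₀)/δ → (Id − L₀)^{-1} ṙ as δ → 0, where L₀ f₀ = f₀ and L_δ f_δ = f_δ. -/

import Mathlib

open Filter

/-- Abstract linear response formula. Under boundedness of the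
resolvent `(Id - L₀)⁻¹` on a closed subspace `V`, convergence `f_δ → f₀`,
uniform boundedness of the difference quotients `(L_δ - L₀)/δ`, and convergence
`(L_δ - L₀) f₀ / δ → ṙ ∈ V`, one has `(f_δ - f₀)/δ → (Id - L₀)⁻¹ ṙ`. -/
theorem linear_response_formula
    {X : Type*} [NormedAddCommGroup X] [NormedSpace ℝ X]
    (V : Submodule ℝ X) (hVclosed : IsClosed (V : Set X))
    (L : ℝ → (X →L[ℝ] X)) (f : ℝ → X) (δ₀ : ℝ) (hδ₀ : 0 < δ₀)
    (hfix : ∀ δ ∈ Set.Ico (0 : ℝ) δ₀, L δ (f δ) = f δ)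
    -- (a) (Id - L 0)⁻¹ is a bounded operator on V, realized by `Res`
    (Res : X →L[ℝ] X)
    (hRes : ∀ g ∈ V, Res g ∈ V ∧
      ((1 : X →L[ℝ] X) - L 0) (Res g) = g ∧ Res (((1 : X →L[ℝ] X) - L 0) g) = g)
    -- (b) f_δ - f₀ ∈ V and f_δ → f₀
    (hdiffV : ∀ δ ∈ Set.Ico (0 : ℝ) δ₀, f δ - f 0 ∈ V)
    (hfconv : Tendsto f (nhdsWithin 0 (Set.Ioi (0 : ℝ))) (nhds (f 0)))
    -- (c) uniform bound on the difference quotients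
    (M : ℝ) (hM : ∀ δ ∈ Set.Ioo (0 : ℝ) δ₀, ‖L δ - L 0‖ ≤ M * δ)
    -- (d) first-order expansion on f₀, with values in V
    (rdot : X) (hrdotV : rdot ∈ V)
    (hquotV : ∀ δ ∈ Set.Ioo (0 : ℝ) δ₀, (L δ - L 0) (f δ) ∈ V)
    (hrconv : Tendsto (fun δ : ℝ => δ⁻¹ • ((L δ - L 0) (f 0)))
      (nhdsWithin 0 (Set.Ioi (0 : ℝ))) (nhds rdot)) :
    Tendsto (fun δ : ℝ => δ⁻¹ • (f δ - f 0))
      (nhdsWithin 0 (Set.Ioi (0 : ℝ))) (nhds (Res rdot)) := by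

  have hIoo : Set.Ioo (0:ℝ) δ₀ ∈ nhdsWithin 0 (Set.Ioi (0:ℝ)) :=
    Ioo_mem_nhdsGT_of_mem ⟨le_refl 0, hδ₀⟩
  have hf0 : L 0 (f 0) = f 0 := hfix 0 ⟨le_refl 0, hδ₀⟩
  have key : ∀ δ ∈ Set.Ioo (0:ℝ) δ₀,
      δ⁻¹ • (f δ - f 0) = Res (δ⁻¹ • ((L δ - L 0) (f δ))) := by
    intro δ hδ
    have hfδ : L δ (f δ) = f δ := hfix δ ⟨hδ.1.le, hδ.2⟩
    have hmem : f δ - f 0 ∈ V := hdiffV δ ⟨hδ.1.le, hδ.2⟩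
    have h1 : ((1 : X →L[ℝ] X) - L 0) (f δ - f 0) = (L δ - L 0) (f δ) := by
      simp only [ContinuousLinearMap.sub_apply, ContinuousLinearMap.one_apply,
        map_sub, hf0]
      rw [hfδ]
      abel
    have h2 := (hRes _ hmem).2.2
    rw [h1] at h2
    rw [map_smul, h2]
  have hsecond : Tendsto (fun δ : ℝ => δ⁻¹ • ((L δ - L 0) (f δ - f 0)))
      (nhdsWithin 0 (Set.Ioi (0:ℝ))) (nhds 0) := by
    have hbound : ∀ᶠ δ in nhdsWithin 0 (Set.Ioi (0:ℝ)),
        ‖δ⁻¹ • ((L δ - L 0) (f δ - f 0))‖ ≤ M * ‖f δ - f 0‖ := by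
      filter_upwards [hIoo] with δ hδ
      have hδpos : (0:ℝ) < δ := hδ.1
      have h3 : ‖(L δ - L 0) (f δ - f 0)‖ ≤ (M * δ) * ‖f δ - f 0‖ :=
        le_trans ((L δ - L 0).le_opNorm _)
          (mul_le_mul_of_nonneg_right (hM δ hδ) (norm_nonneg _))
      rw [norm_smul, norm_inv, Real.norm_of_nonneg hδpos.le]
      calc δ⁻¹ * ‖(L δ - L 0) (f δ - f 0)‖
          ≤ δ⁻¹ * ((M * δ) * ‖f δ - f 0‖) := by
            exact mul_le_mul_of_nonneg_left h3 (inv_nonneg.mpr hδpos.le)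
        _ = M * ‖f δ - f 0‖ := by field_simp
    have hMto : Tendsto (fun δ : ℝ => M * ‖f δ - f 0‖)
        (nhdsWithin 0 (Set.Ioi (0:ℝ))) (nhds 0) := by
      have : Tendsto (fun δ : ℝ => f δ - f 0) (nhdsWithin 0 (Set.Ioi (0:ℝ)))
          (nhds 0) := by
        simpa using hfconv.sub (tendsto_const_nhds (x := f 0))
      simpa using (this.norm.const_mul M)
    exact squeeze_zero_norm' hbound hMto
  have htend : Tendsto (fun δ : ℝ => δ⁻¹ • ((L δ - L 0) (f δ)))
      (nhdsWithin 0 (Set.Ioi (0:ℝ))) (nhds rdot) := by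
    have heq : ∀ᶠ δ in nhdsWithin 0 (Set.Ioi (0:ℝ)),
        δ⁻¹ • ((L δ - L 0) (f 0)) + δ⁻¹ • ((L δ - L 0) (f δ - f 0))
          = δ⁻¹ • ((L δ - L 0) (f δ)) := by
      filter_upwards [hIoo] with δ hδ
      rw [← smul_add, ← map_add]
      congr 2
      abel
    have := hrconv.add hsecond
    rw [add_zero] at this
    exact Tendsto.congr' heq this
  have hfin := (Res.continuous.tendsto rdot).comp htend
  refine Tendsto.congr' ?_ hfin
  filter_upwards [hIoo] with δ hδ
  exact (key δ hδ).symm
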